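/- Let m ∈ ℕ with m ≥ 1, let r := 4m + 1 and let n ∈ ℕ be divisible by 2r(r+1). Let G be the complete balanced (r+1)-partite graph on n vertices (so each vertex class has size n/(r+1) and δ(G) = (1 − 1/(r+1))n). Then there is a labelling f: E(G) → {−1,1} so that every perfect K_r-tiling 𝒯 in G has discrepancy zero, i.e. Σ_{e ∈ E(𝒯)} f(e) = 0. -/

import Mathlib

/-- A perfect `K_r`-tiling of a graph `G`: a collection of vertex-disjoint
copies of `K_r` (given as `r`-cliques) covering every vertex. -/
def IsPerfectKTiling {V : Type*} (G : SimpleGraph V) (r : ℕ)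
    (T : Finset (Finset V)) : Prop :=
  (∀ S ∈ T, G.IsNClique r S) ∧
  (T : Set (Finset V)).Pairwise (fun S S' => Disjoint S S') ∧
  (∀ v : V, ∃ S ∈ T, v ∈ S)

/-- The edge set `E(𝒯)` of a tiling: the union of the edge sets of its cliques. -/
def tilingEdges {V : Type*} [DecidableEq V] (T : Finset (Finset V)) : Finset (Sym2 V) :=
  T.biUnion fun S => S.sym2.filter fun e => ¬ e.IsDiag

namespace ExtremalAux

lemma par_sum (m : ℕ) :
    ∑ c ∈ Finset.Ico 1 (2*m+1), (if c % 2 = 1 then (1:ℤ) else -1) = 0 := by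
  induction m with
  | zero => simp
  | succ k ih =>
    have h1 : 2*(k+1)+1 = (2*k+1) + 1 + 1 := by ring
    rw [h1, Finset.sum_Ico_succ_top (by omega), Finset.sum_Ico_succ_top (by omega), ih]
    have e1 : (2*k+1) % 2 = 1 := by omega
    have e2 : (2*k+1+1) % 2 = 0 := by omega
    rw [e1, e2]
    norm_num

lemma sumc (m : ℕ) :
    ∑ c ∈ Finset.Ico 1 (4*m+1), (if (min c (4*m+1-c)) % 2 = 1 then (1:ℤ) else -1) = 0 := by
  rw [← Finset.sum_Ico_consecutive _ (show 1 ≤ 2*m+1 by omega) (show 2*m+1 ≤ 4*m+1 by omega)]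
  have h1 : ∑ c ∈ Finset.Ico 1 (2*m+1), (if (min c (4*m+1-c)) % 2 = 1 then (1:ℤ) else -1)
      = ∑ c ∈ Finset.Ico 1 (2*m+1), (if c % 2 = 1 then (1:ℤ) else -1) := by
    apply Finset.sum_congr rfl
    intro c hc
    simp only [Finset.mem_Ico] at hc
    have : min c (4*m+1-c) = c := by omega
    rw [this]
  have h2 : ∑ c ∈ Finset.Ico (2*m+1) (4*m+1), (if (min c (4*m+1-c)) % 2 = 1 then (1:ℤ) else -1)
      = ∑ c ∈ Finset.Ico 1 (2*m+1), (if c % 2 = 1 then (1:ℤ) else -1) := by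
    apply Finset.sum_nbij' (fun c => 4*m+1-c) (fun c => 4*m+1-c)
    · intro a ha; simp only [Finset.mem_Ico] at *; omega
    · intro a ha; simp only [Finset.mem_Ico] at *; omega
    · intro a ha; simp only [Finset.mem_Ico] at ha; omega
    · intro a ha; simp only [Finset.mem_Ico] at ha; omega
    · intro c hc
      simp only [Finset.mem_Ico] at hc
      have : min c (4*m+1-c) = 4*m+1-c := by omega
      rw [this]
  rw [h1, h2, par_sum]
  ring

def gz (r : ℕ) (x : ZMod r) : ℤ := if (min x.val (-x).val) % 2 = 1 then 1 else -1

lemma gz_neg (r : ℕ) (x : ZMod r) : gz r (-x) = gz r x := by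
  unfold gz; rw [neg_neg, min_comm]

lemma gz_zero (r : ℕ) : gz r 0 = -1 := by
  unfold gz; simp

lemma gz_pm (r : ℕ) (x : ZMod r) : gz r x = 1 ∨ gz r x = -1 := by
  unfold gz; split <;> simp

lemma gz_sum (m : ℕ) : ∑ x : ZMod (4*m+1), gz (4*m+1) x = -1 := by
  haveI : NeZero (4*m+1) := ⟨by omega⟩
  have key : ∑ x : ZMod (4*m+1), gz (4*m+1) x
      = ∑ c ∈ Finset.range (4*m+1),
          (if (min c (if c = 0 then 0 else 4*m+1-c)) % 2 = 1 then (1:ℤ) else -1) := by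
    apply Finset.sum_nbij' (fun x : ZMod (4*m+1) => x.val) (fun c => (c : ZMod (4*m+1)))
    · intro x _; simp [Finset.mem_range, ZMod.val_lt]; exact Nat.lt_succ_iff.mp (ZMod.val_lt x)
    · intro c _; simp
    · intro x _; simp [ZMod.natCast_val, ZMod.cast_id]
    · intro c hc; simp only [Finset.mem_range] at hc; exact ZMod.val_cast_of_lt hc
    · intro x _
      unfold gz
      rw [ZMod.neg_val]
      by_cases h : x = 0
      · simp [h]
      · have : x.val ≠ 0 := fun hh => h (by rwa [← ZMod.val_eq_zero])
        simp [h, this]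
  have congr1 : ∑ c ∈ Finset.Ico 1 (4*m+1),
      (if (min c (if c = 0 then 0 else 4*m+1-c)) % 2 = 1 then (1:ℤ) else -1)
      = ∑ c ∈ Finset.Ico 1 (4*m+1), (if (min c (4*m+1-c)) % 2 = 1 then (1:ℤ) else -1) := by
    apply Finset.sum_congr rfl
    intro c hc
    simp only [Finset.mem_Ico] at hc
    have : c ≠ 0 := by omega
    rw [if_neg this]
  rw [key, Finset.range_eq_Ico, Finset.sum_eq_sum_Ico_succ_bot (by omega), congr1, sumc]
  norm_num

lemma gz_row (m : ℕ) (a : ZMod (4*m+1)) :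
    ∑ b ∈ Finset.univ.erase a, gz (4*m+1) (a - b) = 0 := by
  haveI : NeZero (4*m+1) := ⟨by omega⟩
  have huniv : ∑ b : ZMod (4*m+1), gz (4*m+1) (a - b) = -1 := by
    have h := Fintype.sum_equiv (Equiv.subLeft a) (fun b => gz (4*m+1) (a - b))
      (gz (4*m+1)) (fun b => rfl)
    rw [h]
    exact gz_sum m
  have h := Finset.add_sum_erase Finset.univ (fun b => gz (4*m+1) (a - b)) (Finset.mem_univ a)
  rw [huniv] at h
  have : gz (4*m+1) (a - a) = -1 := by rw [sub_self]; exact gz_zero _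
  linarith [h, this]

lemma sum_offDiag_eq {α M : Type*} [DecidableEq α] [AddCommMonoid M] (s : Finset α)
    (f : α → α → M) :
    ∑ p ∈ s.offDiag, f p.1 p.2 = ∑ x ∈ s, ∑ y ∈ s.erase x, f x y := by
  rw [show s.offDiag = (s ×ˢ s).filter (fun a : α × α => a.1 ≠ a.2) by ext; simp [and_assoc],
    Finset.sum_filter, Finset.sum_product]
  apply Finset.sum_congr rfl
  intro x _
  rw [← Finset.sum_filter, Finset.filter_ne]

lemma gz_offDiag_univ (m : ℕ) :
    ∑ p ∈ (Finset.univ : Finset (ZMod (4*m+1))).offDiag, gz (4*m+1) (p.1 - p.2) = 0 := by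
  rw [sum_offDiag_eq _ (fun x y => gz (4*m+1) (x - y))]
  exact Finset.sum_eq_zero fun x _ => gz_row m x

lemma gz_offDiag_erase (m : ℕ) (a : ZMod (4*m+1)) :
    ∑ p ∈ ((Finset.univ : Finset (ZMod (4*m+1))).erase a).offDiag,
      gz (4*m+1) (p.1 - p.2) = 0 := by
  haveI : NeZero (4*m+1) := ⟨by omega⟩
  rw [sum_offDiag_eq _ (fun x y => gz (4*m+1) (x - y))]
  have inner : ∀ x ∈ Finset.univ.erase a,
      ∑ y ∈ (Finset.univ.erase a).erase x, gz (4*m+1) (x - y) = - gz (4*m+1) (x - a) := by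
    intro x hx
    have hxa : x ≠ a := Finset.ne_of_mem_erase hx
    rw [Finset.erase_right_comm]
    have ha : a ∈ Finset.univ.erase x := Finset.mem_erase.2 ⟨fun h => hxa h.symm, Finset.mem_univ a⟩
    have h := Finset.add_sum_erase (Finset.univ.erase x) (fun y => gz (4*m+1) (x - y)) ha
    rw [gz_row m x] at h
    linarith [h]
  rw [Finset.sum_congr rfl inner, Finset.sum_neg_distrib]
  have : ∑ x ∈ Finset.univ.erase a, gz (4*m+1) (x - a)
      = ∑ x ∈ Finset.univ.erase a, gz (4*m+1) (a - x) := by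
    apply Finset.sum_congr rfl
    intro x _
    rw [← neg_sub a x, gz_neg]
  rw [this, gz_row m a, neg_zero]

lemma gz_offDiag_big (m : ℕ) (B : Finset (ZMod (4*m+1))) (hB : 4*m ≤ B.card) :
    ∑ p ∈ B.offDiag, gz (4*m+1) (p.1 - p.2) = 0 := by
  haveI : NeZero (4*m+1) := ⟨by omega⟩
  have hcard : Fintype.card (ZMod (4*m+1)) = 4*m+1 := ZMod.card _
  have hle : B.card ≤ 4*m+1 := by
    calc B.card ≤ Fintype.card (ZMod (4*m+1)) := Finset.card_le_univ B
    _ = 4*m+1 := hcard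
  rcases eq_or_lt_of_le hle with heq | hlt
  · have : B = Finset.univ := Finset.eq_univ_of_card B (heq.trans hcard.symm)
    rw [this]; exact gz_offDiag_univ m
  · have hne : B ≠ Finset.univ := by
      intro h; rw [h, Finset.card_univ, hcard] at hlt; omega
    obtain ⟨a, ha⟩ : ∃ a, a ∉ B := by
      by_contra h; push_neg at h
      exact hne (Finset.eq_univ_iff_forall.2 h)
    have hsub : B ⊆ Finset.univ.erase a := fun x hx =>
      Finset.mem_erase.2 ⟨fun h => ha (h ▸ hx), Finset.mem_univ x⟩
    have hBeq : B = Finset.univ.erase a := by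
      apply Finset.eq_of_subset_of_card_le hsub
      rw [Finset.card_erase_of_mem (Finset.mem_univ a), Finset.card_univ, hcard]
      omega
    rw [hBeq]; exact gz_offDiag_erase m a

def iota (r : ℕ) (i : Fin (r+1)) : ZMod r := ((i.val - 1 : ℕ) : ZMod r)

lemma iota_inj (m : ℕ) (i j : Fin (4*m+1+1)) (hi : i ≠ 0) (hj : j ≠ 0)
    (h : iota (4*m+1) i = iota (4*m+1) j) : i = j := by
  have h1 : i.val ≠ 0 := fun hh => hi (Fin.ext hh)
  have h2 : j.val ≠ 0 := fun hh => hj (Fin.ext hh)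
  have e1 : (iota (4*m+1) i).val = i.val - 1 := ZMod.val_cast_of_lt (by omega)
  have e2 : (iota (4*m+1) j).val = j.val - 1 := ZMod.val_cast_of_lt (by omega)
  have : i.val - 1 = j.val - 1 := by rw [← e1, ← e2, h]
  exact Fin.ext (by omega)

lemma hsum_zero (m N : ℕ) (S : Finset ((_ : Fin (4*m+1+1)) × Fin N))
    (hcard : S.card = 4*m+1)
    (hdist : ∀ u ∈ S, ∀ v ∈ S, u ≠ v → u.1 ≠ v.1) :
    ∑ p ∈ S.offDiag, (if p.1.1 = 0 ∨ p.2.1 = 0 then 0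
      else gz (4*m+1) (iota (4*m+1) p.1.1 - iota (4*m+1) p.2.1)) = 0 := by
  classical
  set S' := S.filter (fun u => u.1 ≠ 0) with hS'
  have hsub : S' ⊆ S := Finset.filter_subset _ _
  have hsubOff : S'.offDiag ⊆ S.offDiag := Finset.offDiag_mono hsub
  have step1 : ∑ p ∈ S.offDiag, (if p.1.1 = 0 ∨ p.2.1 = 0 then 0
      else gz (4*m+1) (iota (4*m+1) p.1.1 - iota (4*m+1) p.2.1))
      = ∑ p ∈ S'.offDiag, (if p.1.1 = 0 ∨ p.2.1 = 0 then 0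
      else gz (4*m+1) (iota (4*m+1) p.1.1 - iota (4*m+1) p.2.1)) := by
    symm
    apply Finset.sum_subset hsubOff
    intro p hp hnp
    rw [Finset.mem_offDiag] at hp
    rw [if_pos]
    by_contra hcon
    push_neg at hcon
    apply hnp
    rw [Finset.mem_offDiag]
    refine ⟨Finset.mem_filter.2 ⟨hp.1, hcon.1⟩, Finset.mem_filter.2 ⟨hp.2.1, hcon.2⟩, hp.2.2⟩
  rw [step1]
  have step2 : ∑ p ∈ S'.offDiag, (if p.1.1 = 0 ∨ p.2.1 = 0 then 0
      else gz (4*m+1) (iota (4*m+1) p.1.1 - iota (4*m+1) p.2.1))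
      = ∑ p ∈ S'.offDiag, gz (4*m+1) (iota (4*m+1) p.1.1 - iota (4*m+1) p.2.1) := by
    apply Finset.sum_congr rfl
    intro p hp
    rw [Finset.mem_offDiag] at hp
    have h1 := (Finset.mem_filter.1 hp.1).2
    have h2 := (Finset.mem_filter.1 hp.2.1).2
    rw [if_neg (by tauto)]
  rw [step2]
  set B := S'.image (fun u => iota (4*m+1) u.1) with hB
  have himg : ∀ u ∈ S', ∀ v ∈ S', iota (4*m+1) u.1 = iota (4*m+1) v.1 → u = v := by
    intro u hu v hv h
    by_contra hne
    have hu0 := (Finset.mem_filter.1 hu).2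
    have hv0 := (Finset.mem_filter.1 hv).2
    exact hdist u (hsub hu) v (hsub hv) hne (iota_inj m _ _ hu0 hv0 h)
  have step3 : ∑ p ∈ S'.offDiag, gz (4*m+1) (iota (4*m+1) p.1.1 - iota (4*m+1) p.2.1)
      = ∑ q ∈ B.offDiag, gz (4*m+1) (q.1 - q.2) := by
    apply Finset.sum_nbij (fun p => (iota (4*m+1) p.1.1, iota (4*m+1) p.2.1))
    · intro p hp
      rw [Finset.mem_offDiag] at hp ⊢
      refine ⟨Finset.mem_image_of_mem _ hp.1, Finset.mem_image_of_mem _ hp.2.1, ?_⟩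
      intro h
      exact hp.2.2 (himg _ hp.1 _ hp.2.1 h)
    · intro p hp q hq h
      simp only [Finset.mem_coe, Finset.mem_offDiag] at hp hq
      have h1 : iota (4*m+1) p.1.1 = iota (4*m+1) q.1.1 := congrArg Prod.fst h
      have h2 : iota (4*m+1) p.2.1 = iota (4*m+1) q.2.1 := congrArg Prod.snd h
      exact Prod.ext (himg _ hp.1 _ hq.1 h1) (himg _ hp.2.1 _ hq.2.1 h2)
    · intro q hq
      simp only [Finset.mem_coe, Finset.mem_offDiag] at hq
      obtain ⟨u, hu, hu1⟩ := Finset.mem_image.1 hq.1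
      obtain ⟨v, hv, hv1⟩ := Finset.mem_image.1 hq.2.1
      refine ⟨(u, v), ?_, ?_⟩
      · simp only [Finset.mem_coe, Finset.mem_offDiag]
        refine ⟨hu, hv, ?_⟩
        intro h
        exact hq.2.2 (by rw [← hu1, ← hv1, h])
      · simp [hu1, hv1]
    · intro p _
      rfl
  rw [step3]
  apply gz_offDiag_big
  have hinj : Set.InjOn (fun u : (_ : Fin (4*m+1+1)) × Fin N => iota (4*m+1) u.1)
      (S' : Set ((_ : Fin (4*m+1+1)) × Fin N)) := by
    intro u hu v hv h
    exact himg u hu v hv h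
  have hBcard : B.card = S'.card := Finset.card_image_of_injOn hinj
  have hfilter : (S.filter (fun u => u.1 = 0)).card ≤ 1 := by
    rw [Finset.card_le_one]
    intro u hu v hv
    rw [Finset.mem_filter] at hu hv
    by_contra hne
    exact hdist u hu.1 v hv.1 hne (hu.2.trans hv.2.symm)
  have hsplit := Finset.card_filter_add_card_filter_not
    (s := S) (p := fun u => u.1 = 0)
  rw [hBcard, show S' = S.filter (fun u => ¬ u.1 = 0) from rfl]
  omega

lemma two_mul_sym2_sum {α : Type*} [DecidableEq α] (s : Finset α) (F : α → α → ℤ)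
    (hF : ∀ a b, F a b = F b a) :
    2 * ∑ e ∈ s.sym2.filter (fun e => ¬ e.IsDiag), Sym2.lift ⟨F, hF⟩ e
      = ∑ p ∈ s.offDiag, F p.1 p.2 := by
  classical
  have h1 : ∑ p ∈ s.offDiag, F p.1 p.2
      = ∑ p ∈ s.offDiag, Sym2.lift ⟨F, hF⟩ (Sym2.mk.uncurry p) := by
    apply Finset.sum_congr rfl
    intro p _
    rfl
  rw [h1, Finset.sum_comp (Sym2.lift ⟨F, hF⟩) Sym2.mk.uncurry]
  have himg : s.offDiag.image Sym2.mk.uncurry = s.sym2.filter (fun e => ¬ e.IsDiag) := by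
    ext e
    induction e with
    | _ a b =>
      simp only [Finset.mem_image, Finset.mem_filter, Finset.mk_mem_sym2_iff,
        Sym2.isDiag_iff_proj_eq, Finset.mem_offDiag]
      constructor
      · rintro ⟨⟨x, y⟩, ⟨hx, hy, hxy⟩, hmk⟩
        rw [Function.uncurry_apply_pair, Sym2.mk_eq_mk_iff (p := (x, y)) (q := (a, b))] at hmk
        rcases hmk with h | h
        · obtain ⟨h1, h2⟩ := Prod.mk.inj h.symm
          subst h1; subst h2
          exact ⟨⟨hx, hy⟩, hxy⟩
        · obtain ⟨h1, h2⟩ := Prod.mk.inj h.symm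
          subst h1; subst h2
          exact ⟨⟨hy, hx⟩, fun hh => hxy hh.symm⟩
      · rintro ⟨⟨ha, hb⟩, hab⟩
        exact ⟨(a, b), ⟨ha, hb, hab⟩, rfl⟩
  rw [himg]
  rw [Finset.mul_sum]
  apply Finset.sum_congr rfl
  intro e he
  induction e with
  | _ a b =>
    simp only [Finset.mem_filter, Finset.mk_mem_sym2_iff, Sym2.isDiag_iff_proj_eq] at he
    obtain ⟨⟨ha, hb⟩, hab⟩ := he
    have hfib : s.offDiag.filter (fun p => Sym2.mk.uncurry p = s(a, b)) = {(a, b), (b, a)} := by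
      ext ⟨x, y⟩
      simp only [Finset.mem_filter, Finset.mem_offDiag, Finset.mem_insert,
        Finset.mem_singleton, Function.uncurry_apply_pair, Sym2.eq_iff, Sym2.mk_eq_mk_iff,
        Prod.mk.injEq, Prod.swap_prod_mk]
      constructor
      · rintro ⟨_, h⟩; exact h
      · rintro (⟨h1, h2⟩ | ⟨h1, h2⟩)
        · subst h1; subst h2; exact ⟨⟨ha, hb, hab⟩, by simp⟩
        · subst h1; subst h2; exact ⟨⟨hb, ha, fun h => hab h.symm⟩, by simp⟩
    rw [hfib]
    have hne : (a, b) ≠ (b, a) := fun h => hab (Prod.mk.inj h).1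
    rw [Finset.card_insert_of_notMem (by simp [hne]), Finset.card_singleton]
    simp [nsmul_eq_mul]

def sfun (N : ℕ) (x : Fin N) : ℤ := if (x : ℕ) < N/2 then 1 else -1

lemma sfun_pm (N : ℕ) (x : Fin N) : sfun N x = 1 ∨ sfun N x = -1 := by
  unfold sfun; split <;> simp

lemma sfun_sum (N : ℕ) (hN : 2 ∣ N) : ∑ x : Fin N, sfun N x = 0 := by
  show ∑ x : Fin N, (if (x : ℕ) < N/2 then (1:ℤ) else -1) = 0
  rw [Fin.sum_univ_eq_sum_range (fun c => if c < N/2 then (1:ℤ) else -1)]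
  rw [← Finset.sum_range_add_sum_Ico _ (Nat.div_le_self N 2)]
  have h1 : ∑ c ∈ Finset.range (N/2), (if c < N/2 then (1:ℤ) else -1) = ((N/2 : ℕ) : ℤ) := by
    rw [Finset.sum_congr rfl (fun c hc => if_pos (Finset.mem_range.1 hc))]
    simp
  have h2 : ∑ c ∈ Finset.Ico (N/2) N, (if c < N/2 then (1:ℤ) else -1)
      = -(((N - N/2 : ℕ)) : ℤ) := by
    rw [Finset.sum_congr rfl (fun c hc => if_neg (by simp only [Finset.mem_Ico] at hc; omega))]
    rw [Finset.sum_const, Nat.card_Ico, nsmul_eq_mul, mul_neg_one]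
  rw [h1, h2]
  have h3 : N - N/2 = N/2 := by omega
  rw [h3]
  ring

def Ffun (m N : ℕ) (u v : (_ : Fin (4*m+1+1)) × Fin N) : ℤ :=
  if u.1 = 0 then (if v.1 = 0 then 1 else sfun N u.2)
  else if v.1 = 0 then sfun N v.2
  else gz (4*m+1) (iota (4*m+1) u.1 - iota (4*m+1) v.1)

lemma Ffun_symm (m N : ℕ) : ∀ u v, Ffun m N u v = Ffun m N v u := by
  intro u v
  unfold Ffun
  by_cases h1 : u.1 = 0 <;> by_cases h2 : v.1 = 0 <;> simp [h1, h2]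
  rw [← gz_neg, neg_sub]

lemma Ffun_pm (m N : ℕ) (u v : (_ : Fin (4*m+1+1)) × Fin N) :
    Ffun m N u v = 1 ∨ Ffun m N u v = -1 := by
  unfold Ffun
  by_cases h1 : u.1 = 0 <;> by_cases h2 : v.1 = 0 <;> simp [h1, h2]
  · exact sfun_pm N u.2
  · exact sfun_pm N v.2
  · exact gz_pm _ _

end ExtremalAux

open ExtremalAux in
/-- Extremal example for `r ≡ 1 (mod 4)`: the complete balanced `(r+1)`-partite graph on
`n` vertices admits a `±1`-labelling for which every perfect `K_r`-tiling has discrepancy `0`. -/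
theorem extremal_example_r_eq_one_mod_four (m r n : ℕ) (hm : 1 ≤ m) (hr : r = 4 * m + 1)
    (hn : 2 * r * (r + 1) ∣ n) :
    ∃ f : Sym2 ((_ : Fin (r + 1)) × Fin (n / (r + 1))) → ℤ,
      (∀ e ∈ (SimpleGraph.completeMultipartiteGraph
          fun _ : Fin (r + 1) => Fin (n / (r + 1))).edgeSet, f e = 1 ∨ f e = -1) ∧
      ∀ T : Finset (Finset ((_ : Fin (r + 1)) × Fin (n / (r + 1)))),
        IsPerfectKTiling
          (SimpleGraph.completeMultipartiteGraph fun _ : Fin (r + 1) => Fin (n / (r + 1))) r T →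
        ∑ e ∈ tilingEdges T, f e = 0 := by
  subst hr
  classical
  set N := n / (4*m+1+1) with hNdef
  have hNeven : 2 ∣ N := by
    obtain ⟨t, ht⟩ := hn
    have hn2 : n = (4*m+1+1) * (2*(4*m+1)*t) := by rw [ht]; ring
    rw [hNdef, hn2, Nat.mul_div_cancel_left _ (by omega)]
    exact ⟨(4*m+1)*t, by ring⟩
  refine ⟨Sym2.lift ⟨Ffun m N, Ffun_symm m N⟩, ?_, ?_⟩
  · intro e _
    induction e with
    | _ a b =>
      rw [Sym2.lift_mk]
      exact Ffun_pm m N a b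
  · intro T hT
    obtain ⟨hclique, hdisj, hcover⟩ := hT
    have hadj : ∀ S ∈ T, ∀ u ∈ S, ∀ v ∈ S, u ≠ v → u.1 ≠ v.1 := by
      intro S hS u hu v hv huv
      have h := (hclique S hS).isClique (Finset.mem_coe.2 hu) (Finset.mem_coe.2 hv) huv
      simpa using h
    have hdE : (↑T : Set (Finset ((_ : Fin (4*m+1+1)) × Fin N))).PairwiseDisjoint
        (fun S => S.sym2.filter (fun e => ¬ e.IsDiag)) := by
      intro S hS S' hS' hne
      simp only [Function.onFun]
      rw [Finset.disjoint_left]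
      intro e he he'
      rw [Finset.mem_filter] at he he'
      obtain ⟨heS, _⟩ := he
      obtain ⟨heS', _⟩ := he'
      induction e with
      | _ a b =>
        rw [Finset.mk_mem_sym2_iff] at heS heS'
        exact (Finset.disjoint_left.1 (hdisj hS hS' hne) heS.1) heS'.1
    rw [tilingEdges, Finset.sum_biUnion hdE]
    -- per-clique computation
    have hper : ∀ S ∈ T, 2 * ∑ e ∈ S.sym2.filter (fun e => ¬ e.IsDiag),
        Sym2.lift ⟨Ffun m N, Ffun_symm m N⟩ e
        = (8 * m : ℤ) * ∑ u ∈ S, (if u.1 = 0 then sfun N u.2 else 0) := by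
      intro S hS
      rw [two_mul_sym2_sum]
      have hcard := (hclique S hS).card_eq
      have hdistS : ∀ u ∈ S, ∀ v ∈ S, u ≠ v → u.1 ≠ v.1 := fun u hu v hv huv =>
        hadj S hS u hu v hv huv
      have hsplit : ∀ p ∈ S.offDiag, Ffun m N p.1 p.2
          = ((if p.1.1 = 0 then sfun N p.1.2 else 0) + (if p.2.1 = 0 then sfun N p.2.2 else 0))
            + (if p.1.1 = 0 ∨ p.2.1 = 0 then 0
                else gz (4*m+1) (iota (4*m+1) p.1.1 - iota (4*m+1) p.2.1)) := by
        intro p hp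
        rw [Finset.mem_offDiag] at hp
        have hne := hdistS p.1 hp.1 p.2 hp.2.1 hp.2.2
        unfold Ffun
        by_cases h1 : p.1.1 = 0 <;> by_cases h2 : p.2.1 = 0
        · exact absurd (h1.trans h2.symm) hne
        · simp [h1, h2]
        · simp [h1, h2]
        · simp [h1, h2]
      rw [Finset.sum_congr rfl hsplit, Finset.sum_add_distrib, Finset.sum_add_distrib,
        hsum_zero m N S hcard hdistS, add_zero]
      have e1 : ∑ p ∈ S.offDiag, (if p.1.1 = 0 then sfun N p.1.2 else 0)
          = (4*m : ℤ) * ∑ u ∈ S, (if u.1 = 0 then sfun N u.2 else 0) := by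
        rw [sum_offDiag_eq S (fun x y => if x.1 = 0 then sfun N x.2 else 0), Finset.mul_sum]
        apply Finset.sum_congr rfl
        intro x hx
        rw [Finset.sum_const, Finset.card_erase_of_mem hx, hcard, nsmul_eq_mul]
        norm_num
      have e2 : ∑ p ∈ S.offDiag, (if p.2.1 = 0 then sfun N p.2.2 else 0)
          = (4*m : ℤ) * ∑ u ∈ S, (if u.1 = 0 then sfun N u.2 else 0) := by
        rw [sum_offDiag_eq S (fun x y => if y.1 = 0 then sfun N y.2 else 0)]
        have inner : ∀ x ∈ S, ∑ y ∈ S.erase x, (if y.1 = 0 then sfun N y.2 else 0)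
            = (∑ u ∈ S, (if u.1 = 0 then sfun N u.2 else 0))
              - (if x.1 = 0 then sfun N x.2 else 0) := fun x hx => Finset.sum_erase_eq_sub hx
        rw [Finset.sum_congr rfl inner, Finset.sum_sub_distrib, Finset.sum_const, hcard,
          nsmul_eq_mul]
        push_cast
        ring
      rw [e1, e2]
      ring
    have hd2 : (↑T : Set (Finset ((_ : Fin (4*m+1+1)) × Fin N))).PairwiseDisjoint id :=
      fun S hS S' hS' hne => hdisj hS hS' hne
    have huniv : T.biUnion id = (Finset.univ : Finset ((_ : Fin (4*m+1+1)) × Fin N)) := by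
      apply Finset.eq_univ_iff_forall.2
      intro v
      obtain ⟨S, hS, hv⟩ := hcover v
      exact Finset.mem_biUnion.2 ⟨S, hS, hv⟩
    have hcov : ∑ S ∈ T, ∑ u ∈ S, (if u.1 = 0 then sfun N u.2 else 0)
        = ∑ u : (_ : Fin (4*m+1+1)) × Fin N, (if u.1 = 0 then sfun N u.2 else 0) := by
      rw [← huniv, Finset.sum_biUnion hd2]
      rfl
    have hsig : ∑ u : (_ : Fin (4*m+1+1)) × Fin N, (if u.1 = 0 then sfun N u.2 else 0) = 0 := by
      rw [← Finset.univ_sigma_univ, Finset.sum_sigma]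
      have inner : ∀ i ∈ (Finset.univ : Finset (Fin (4*m+1+1))),
          ∑ x : Fin N, (if (⟨i, x⟩ : (_ : Fin (4*m+1+1)) × Fin N).1 = 0 then
            sfun N (⟨i, x⟩ : (_ : Fin (4*m+1+1)) × Fin N).2 else 0)
          = (if i = 0 then ∑ x : Fin N, sfun N x else 0) := by
        intro i _
        by_cases h : i = 0 <;> simp [h]
      rw [Finset.sum_congr rfl inner, Finset.sum_ite_eq' Finset.univ (0 : Fin (4*m+1+1))]
      simp [sfun_sum N hNeven]
    have htot : 2 * ∑ S ∈ T, ∑ e ∈ S.sym2.filter (fun e => ¬ e.IsDiag),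
        Sym2.lift ⟨Ffun m N, Ffun_symm m N⟩ e = 0 := by
      rw [Finset.mul_sum, Finset.sum_congr rfl hper, ← Finset.mul_sum, hcov, hsig, mul_zero]
    omega
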